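/- Let (g, μ, T, B) be a quadratic Hom-Lie algebra over a field of characteristic zero with μ-equivariant T, and define [x,y] := T(μ(x,y)) for all x, y ∈ g. Then [·,·] is a Lie bracket on g (skew-symmetric and satisfying the Jacobi identity), B is invariant under [·,·] (i.e. B([x,y],z) = B(x,[y,z]) for all x,y,z), and T([x,y]) = [T(x), y] for all x, y ∈ g; hence (g, [·,·], B) is a quadratic Lie algebra. -/
import Mathlib


/-- A quadratic Hom-Lie algebra `(g, μ, T, B)` with `μ`-equivariant `T` gives rise to a
quadratic Lie algebra `(g, [·,·], B)` with `[x,y] = T(μ(x,y))`, and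
`T([x,y]) = [T(x), y]`. -/
theorem quadratic_homLie_gives_quadratic_lie
    {F : Type*} [Field F] [CharZero F]
    {g : Type*} [AddCommGroup g] [Module F g] [FiniteDimensional F g]
    (μ : g →ₗ[F] g →ₗ[F] g) (T : g →ₗ[F] g) (B : g →ₗ[F] g →ₗ[F] F)
    (hskew : ∀ x y : g, μ x y = - μ y x)
    (hjac : ∀ x y z : g, μ (T x) (μ y z) + μ (T y) (μ z x) + μ (T z) (μ x y) = 0)
    (hequiv : ∀ x y : g, T (μ x y) = μ (T x) y)
    (hBsymm : ∀ x y : g, B x y = B y x)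
    (hBnondeg : ∀ x : g, (∀ y : g, B x y = 0) → x = 0)
    (hBinv : ∀ x y z : g, B (μ x y) z = B x (μ y z))
    (hTsa : ∀ x y : g, B (T x) y = B x (T y)) :
    (∀ x y : g, T (μ x y) = - T (μ y x)) ∧
    (∀ x y z : g,
      T (μ x (T (μ y z))) + T (μ y (T (μ z x))) + T (μ z (T (μ x y))) = 0) ∧
    (∀ x y z : g, B (T (μ x y)) z = B x (T (μ y z))) ∧
    (∀ x y : g, T (T (μ x y)) = T (μ (T x) y)) := by
  -- Key: equivariance holds in the second slot as well.
  have key : ∀ x y : g, μ x (T y) = μ (T x) y := by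
    intro x y
    rw [hskew x (T y), ← hequiv, hskew y x, map_neg, neg_neg, hequiv]
  refine ⟨fun x y => by rw [hskew x y, map_neg], fun x y z => ?_, fun x y z => ?_,
    fun x y => congrArg T (hequiv x y)⟩
  · have hA : T (μ x (T (μ y z))) = μ (T x) (μ (T y) z) := by
      rw [hequiv, hequiv]
    have hB : T (μ y (T (μ z x))) = μ (T (T y)) (μ z x) := by
      rw [hequiv y, key]
    have hC : T (μ z (T (μ x y))) = μ (T z) (μ x (T y)) := by
      rw [hequiv z, hequiv x, key]
    rw [hA, hB, hC]
    exact hjac x (T y) z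
  · rw [hTsa, hBinv, key, ← hequiv]
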